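/- Let n ≥ 2 and let 𝔫 = ℝⁿ ⊕ 𝔰𝔬(n) ⊕ ℝⁿ be the Lie algebra with bracket [(x, A, z), (x', A', z')] = (0, x x'ᵀ − x' xᵀ, A x' − A' x). Then 𝔫 is generated as a Lie algebra by the n elements Nᵢ = (eᵢ, 0, 0), i = 1, …, n; that is, the smallest Lie subalgebra of 𝔫 containing all the Nᵢ is 𝔫 itself. -/

import Mathlib

open Matrix

/-- `𝔰𝔬(n)`: the space of real skew-symmetric `n × n` matrices. -/
def soN (n : ℕ) : Submodule ℝ (Matrix (Fin n) (Fin n) ℝ) where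
  carrier := {A | Aᵀ = -A}
  add_mem' := by
    intro a b ha hb
    simp only [Set.mem_setOf_eq] at *
    rw [Matrix.transpose_add, ha, hb, neg_add]
  zero_mem' := by simp
  smul_mem' := by
    intro c a ha
    simp only [Set.mem_setOf_eq] at *
    rw [Matrix.transpose_smul, ha, smul_neg]

/-- `𝔫 = ℝⁿ ⊕ 𝔰𝔬(n) ⊕ ℝⁿ`. -/
abbrev Nilp (n : ℕ) := (Fin n → ℝ) × soN n × (Fin n → ℝ)

lemma wedge_mem_soN (n : ℕ) (x y : Fin n → ℝ) :
    vecMulVec x y - vecMulVec y x ∈ soN n := by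
  show _ᵀ = _
  ext i j
  simp [vecMulVec_apply, mul_comm]

/-- The bracket `[(x, A, z), (x', A', z')] = (0, x x'ᵀ − x' xᵀ, A x' − A' x)`. -/
def nilpBracket {n : ℕ} (a b : Nilp n) : Nilp n :=
  (0,
   ⟨vecMulVec a.1 b.1 - vecMulVec b.1 a.1, wedge_mem_soN n a.1 b.1⟩,
   (a.2.1 : Matrix (Fin n) (Fin n) ℝ).mulVec b.1
     - (b.2.1 : Matrix (Fin n) (Fin n) ℝ).mulVec a.1)

/-- `Nᵢ = (eᵢ, 0, 0)`, where `eᵢ` is the standard basis of `ℝⁿ`. -/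
def NGen (n : ℕ) (i : Fin n) : Nilp n := (Pi.single i 1, 0, 0)

lemma wedge_apply {n : ℕ} (i j k l : Fin n) :
    (vecMulVec (Pi.single i 1) (Pi.single j 1)
      - vecMulVec (Pi.single j 1) (Pi.single i 1) : Matrix (Fin n) (Fin n) ℝ) k l
    = (if i = k then (1:ℝ) else 0) * (if j = l then 1 else 0)
      - (if j = k then (1:ℝ) else 0) * (if i = l then 1 else 0) := by
  simp [Matrix.sub_apply, vecMulVec_apply, Pi.single_apply, eq_comm]

lemma sumW {n : ℕ} (B : Matrix (Fin n) (Fin n) ℝ) (hB : Bᵀ = -B) (k l : Fin n) :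
    ∑ i, ∑ j, B i j / 2 * ((if i = k then (1:ℝ) else 0) * (if j = l then 1 else 0)
      - (if j = k then (1:ℝ) else 0) * (if i = l then 1 else 0)) = B k l := by
  have hsk : B l k = -B k l := by
    have := congrFun (congrFun hB k) l
    simpa using this
  simp only [mul_sub, ite_mul, one_mul, zero_mul, mul_ite, mul_one, mul_zero,
    Finset.sum_sub_distrib, Finset.sum_ite_eq', Finset.sum_ite_eq, Finset.mem_univ,
    if_true]
  rw [Finset.sum_comm]
  simp only [Finset.sum_ite_eq', Finset.mem_univ, if_true]
  rw [hsk]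
  ring

/-- The Lie algebra `𝔫 = ℝⁿ ⊕ 𝔰𝔬(n) ⊕ ℝⁿ` with bracket
`[(x, A, z), (x', A', z')] = (0, x x'ᵀ − x' xᵀ, A x' − A' x)` is generated, as a Lie
algebra, by the `n` elements `Nᵢ = (eᵢ, 0, 0)`: every subspace of `𝔫` that is closed
under the bracket (i.e. every Lie subalgebra) and contains all the `Nᵢ` is `𝔫` itself. -/
theorem nilp_generated_by_N (n : ℕ) (hn : 2 ≤ n) :
    ∀ S : Submodule ℝ (Nilp n),
      (∀ a ∈ S, ∀ b ∈ S, nilpBracket a b ∈ S) →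
      (∀ i : Fin n, NGen n i ∈ S) →
      S = ⊤ := by
  intro S hB hN
  have hnt : Nontrivial (Fin n) := Fin.nontrivial_iff_two_le.mpr hn
  -- wedges
  set W : Fin n → Fin n → soN n := fun i j =>
    ⟨vecMulVec (Pi.single i 1) (Pi.single j 1) - vecMulVec (Pi.single j 1) (Pi.single i 1),
      wedge_mem_soN n _ _⟩ with hWdef
  have hW : ∀ i j, ((0, W i j, 0) : Nilp n) ∈ S := by
    intro i j
    have h := hB _ (hN i) _ (hN j)
    have he : nilpBracket (NGen n i) (NGen n j) = ((0, W i j, 0) : Nilp n) := by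
      refine Prod.ext rfl (Prod.ext ?_ ?_)
      · rfl
      · show _ - _ = (0 : Fin n → ℝ)
        simp [NGen]
        ext k; simp [Matrix.col_apply]
    rwa [he] at h
  -- (x, 0, 0) ∈ S
  have hx : ∀ x : Fin n → ℝ, ((x, 0, 0) : Nilp n) ∈ S := by
    intro x
    have he : ((x, 0, 0) : Nilp n) = ∑ i, x i • NGen n i := by
      refine Prod.ext ?_ (Prod.ext ?_ ?_)
      · show x = (∑ i, x i • NGen n i).1
        rw [Prod.fst_sum]
        funext j
        simp [NGen, Finset.sum_apply, Pi.single_apply]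
      · show (0 : soN n) = (∑ i, x i • NGen n i).2.1
        rw [Prod.snd_sum, Prod.fst_sum]
        simp [NGen]
      · show (0 : Fin n → ℝ) = (∑ i, x i • NGen n i).2.2
        rw [Prod.snd_sum, Prod.snd_sum]
        simp [NGen]
    rw [he]
    exact Submodule.sum_mem S fun i _ => Submodule.smul_mem S _ (hN i)
  -- (0, 0, eᵢ) ∈ S
  have hz1 : ∀ i : Fin n, ((0, 0, Pi.single i 1) : Nilp n) ∈ S := by
    intro i
    obtain ⟨j, hj⟩ := exists_ne i
    have h := hB _ (hW i j) _ (hN j)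
    have he : nilpBracket ((0, W i j, 0) : Nilp n) (NGen n j)
        = ((0, 0, Pi.single i 1) : Nilp n) := by
      refine Prod.ext rfl (Prod.ext ?_ ?_)
      · apply Subtype.ext
        show vecMulVec _ _ - vecMulVec _ _ = (0 : Matrix (Fin n) (Fin n) ℝ)
        ext a b
        simp [NGen, vecMulVec_apply]
      · show (W i j : Matrix (Fin n) (Fin n) ℝ).mulVec _ - _ = Pi.single i 1
        funext k
        simp only [NGen, hWdef]
        simp [mulVec, vecMulVec, dotProduct, Pi.single_apply, sub_mul, mul_ite,
          Finset.sum_ite_eq', Finset.sum_sub_distrib, hj.symm]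
        intro h'
        exact absurd h' hj
    rwa [he] at h
  have hz : ∀ z : Fin n → ℝ, ((0, 0, z) : Nilp n) ∈ S := by
    intro z
    have he : ((0, 0, z) : Nilp n) = ∑ i, z i • ((0, 0, Pi.single i 1) : Nilp n) := by
      refine Prod.ext ?_ (Prod.ext ?_ ?_)
      · show (0 : Fin n → ℝ) = _
        rw [Prod.fst_sum]; simp
      · show (0 : soN n) = _
        rw [Prod.snd_sum, Prod.fst_sum]; simp
      · show z = _
        rw [Prod.snd_sum, Prod.snd_sum]
        funext k
        simp [Finset.sum_apply, Pi.single_apply]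
    rw [he]
    exact Submodule.sum_mem S fun i _ => Submodule.smul_mem S _ (hz1 i)
  -- (0, A, 0) ∈ S
  have hA : ∀ A : soN n, ((0, A, 0) : Nilp n) ∈ S := by
    intro A
    have hskew : ∀ k l, (A : Matrix (Fin n) (Fin n) ℝ) l k
        = -(A : Matrix (Fin n) (Fin n) ℝ) k l := by
      intro k l
      have := A.2
      have h2 : (A : Matrix (Fin n) (Fin n) ℝ)ᵀ k l = (-(A : Matrix (Fin n) (Fin n) ℝ)) k l := by
        rw [this]
      simpa [Matrix.transpose_apply] using h2
    have he : ((0, A, 0) : Nilp n)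
        = ∑ i, ∑ j, ((A : Matrix (Fin n) (Fin n) ℝ) i j / 2) • ((0, W i j, 0) : Nilp n) := by
      refine Prod.ext ?_ (Prod.ext ?_ ?_)
      · show (0 : Fin n → ℝ) = _
        rw [Prod.fst_sum]
        simp [Prod.fst_sum]
      · apply Subtype.ext
        show (A : Matrix (Fin n) (Fin n) ℝ) = _
        rw [Prod.snd_sum, Prod.fst_sum, Submodule.coe_sum]
        ext k l
        rw [Matrix.sum_apply]
        have : ∀ i, (((∑ j, ((A : Matrix (Fin n) (Fin n) ℝ) i j / 2) •
            ((0 : Fin n → ℝ), W i j, (0 : Fin n → ℝ))).2.1 : Matrix (Fin n) (Fin n) ℝ)) k l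
            = ∑ j, ((A : Matrix (Fin n) (Fin n) ℝ) i j / 2) * ((W i j : Matrix (Fin n) (Fin n) ℝ) k l) := by
          intro i
          rw [Prod.snd_sum, Prod.fst_sum, Submodule.coe_sum, Matrix.sum_apply]
          simp [smul_eq_mul]
        rw [Finset.sum_congr rfl fun i _ => this i]
        have hWkl : ∀ i j, ((W i j : Matrix (Fin n) (Fin n) ℝ)) k l
            = (if i = k then (1:ℝ) else 0) * (if j = l then 1 else 0)
              - (if j = k then (1:ℝ) else 0) * (if i = l then 1 else 0) :=
          fun i j => wedge_apply i j k l
        rw [Finset.sum_congr rfl fun i _ => Finset.sum_congr rfl fun j _ => by rw [hWkl]]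
        exact (sumW (A : Matrix (Fin n) (Fin n) ℝ) A.2 k l).symm
      · show (0 : Fin n → ℝ) = _
        rw [Prod.snd_sum, Prod.snd_sum]
        simp [Prod.snd_sum]
    rw [he]
    exact Submodule.sum_mem S fun i _ => Submodule.sum_mem S fun j _ =>
      Submodule.smul_mem S _ (hW i j)
  -- conclude
  rw [Submodule.eq_top_iff']
  rintro ⟨x, A, z⟩
  have : ((x, A, z) : Nilp n) = (x, 0, 0) + (0, A, 0) + (0, 0, z) := by
    refine Prod.ext ?_ (Prod.ext ?_ ?_) <;> simp
  rw [this]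
  exact S.add_mem (S.add_mem (hx x) (hA A)) (hz z)
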